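/- arXiv:1203.1108 — 6 statements merged into one kernel-verified Lean document; each statement's English description precedes it below -/
import Mathlib

section
/- Let k be a field and let σ₁, σ₂ ∈ k[t] be nonconstant polynomials with σ₁′ ≠ 0, σ₂′ ≠ 0 and deg σ₁ > deg σ₂. If f·(dt)^ν and g·(dt)^ν are both semi-invariant forms of the same weight ν ∈ ℤ for (σ₁, σ₂), then f = c·g for some constant c ∈ k∖{0}. -/
open Polynomial

/-- Substitution of a polynomial `σ` into a rational function `h`:
if `h = p/q` then `h ∘ σ = (p ∘ σ)/(q ∘ σ)`. -/
noncomputable def ratComp {k : Type*} [Field k] (h : RatFunc k) (σ : k[X]) : RatFunc k :=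
  algebraMap k[X] (RatFunc k) (h.num.comp σ) / algebraMap k[X] (RatFunc k) (h.denom.comp σ)

/-- The order of a rational function `f` at a point `a` of the affine line. -/
noncomputable def ordAt {k : Type*} [Field k] (f : RatFunc k) (a : k) : ℤ :=
  (f.num.rootMultiplicity a : ℤ) - (f.denom.rootMultiplicity a : ℤ)

/-- `f·(dt)^ν` is a semi-invariant form of weight `ν` for the correspondence `(σ₁, σ₂)`
of the affine line: `f ≠ 0` and `σ₁*ω = λ·σ₂*ω` for some constant `λ ≠ 0`, i.e.
`(f∘σ₁)·(σ₁')^ν = λ·(f∘σ₂)·(σ₂')^ν`. -/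
def SemiInvariant {k : Type*} [Field k] (σ₁ σ₂ : k[X]) (f : RatFunc k) (ν : ℤ) : Prop :=
  f ≠ 0 ∧ ∃ lam : k, lam ≠ 0 ∧
    ratComp f σ₁ * (algebraMap k[X] (RatFunc k) (derivative σ₁)) ^ ν
      = RatFunc.C lam *
        (ratComp f σ₂ * (algebraMap k[X] (RatFunc k) (derivative σ₂)) ^ ν)

/-- A nonconstant polynomial `σ` is tamely ramified if `char k` does not divide its degree
and every root of `σ - c`, for every `c`, has multiplicity prime to `char k`. -/
def TamelyRamified {k : Type*} [Field k] (σ : k[X]) : Prop :=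
  ¬ (ringChar k ∣ σ.natDegree) ∧
    ∀ c a : k, (σ - C c).IsRoot a → ¬ (ringChar k ∣ (σ - C c).rootMultiplicity a)

lemma comp_ne_zero' {k : Type*} [Field k] {r σ : k[X]} (hr : r ≠ 0)
    (hσ : 0 < σ.natDegree) : r.comp σ ≠ 0 := by
  rw [Ne, comp_eq_zero_iff]
  rintro (h | ⟨-, h⟩)
  · exact hr h
  · rw [h, natDegree_C] at hσ; exact lt_irrefl 0 hσ

lemma isCoprime_comp' {k : Type*} [Field k] {p q : k[X]} (h : IsCoprime p q) (σ : k[X]) :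
    IsCoprime (p.comp σ) (q.comp σ) := by
  obtain ⟨u, v, huv⟩ := h
  exact ⟨u.comp σ, v.comp σ, by rw [← mul_comp, ← mul_comp, ← add_comp, huv, one_comp]⟩

/-- two semi-invariant forms of the same weight differ by a nonzero constant. -/
theorem semiInvariant_same_weight_unique_up_to_constant
    {k : Type*} [Field k] (σ₁ σ₂ : k[X])
    (h₁ : 0 < σ₁.natDegree) (h₂ : 0 < σ₂.natDegree)
    (h₁' : derivative σ₁ ≠ 0) (h₂' : derivative σ₂ ≠ 0)
    (hdeg : σ₂.natDegree < σ₁.natDegree)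
    (ν : ℤ) (f g : RatFunc k)
    (hf : SemiInvariant σ₁ σ₂ f ν) (hg : SemiInvariant σ₁ σ₂ g ν) :
    ∃ c : k, c ≠ 0 ∧ f = RatFunc.C c * g := by
  classical
  obtain ⟨hf0, lam₁, hlam₁, e₁⟩ := hf
  obtain ⟨hg0, lam₂, hlam₂, e₂⟩ := hg
  set φ := algebraMap k[X] (RatFunc k) with hφ
  have hφinj : Function.Injective φ := IsFractionRing.injective k[X] (RatFunc k)
  set p := f.num with hp'
  set q := f.denom with hq'
  set p' := g.num with hp''
  set q' := g.denom with hq''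
  have hp : p ≠ 0 := RatFunc.num_ne_zero hf0
  have hq : q ≠ 0 := f.denom_ne_zero
  have hp2 : p' ≠ 0 := RatFunc.num_ne_zero hg0
  have hq2 : q' ≠ 0 := g.denom_ne_zero
  -- nonzeroness of various images
  have hmap : ∀ r : k[X], r ≠ 0 → ∀ σ : k[X], 0 < σ.natDegree → φ (r.comp σ) ≠ 0 := by
    intro r hr σ hσ
    simpa using fun h => comp_ne_zero' hr hσ (hφinj (by simpa using h))
  have hD₁ : (φ (derivative σ₁)) ^ ν ≠ 0 :=
    zpow_ne_zero _ (by simpa using fun h => h₁' (hφinj (by simpa using h)))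
  have hD₂ : (φ (derivative σ₂)) ^ ν ≠ 0 :=
    zpow_ne_zero _ (by simpa using fun h => h₂' (hφinj (by simpa using h)))
  -- combine the two semi-invariance equations
  have key : ratComp f σ₁ * RatFunc.C lam₂ * ratComp g σ₂
        * ((φ (derivative σ₁)) ^ ν * (φ (derivative σ₂)) ^ ν)
      = RatFunc.C lam₁ * ratComp f σ₂ * ratComp g σ₁
        * ((φ (derivative σ₁)) ^ ν * (φ (derivative σ₂)) ^ ν) := by
    linear_combination (RatFunc.C lam₂ * ratComp g σ₂ * (φ (derivative σ₂)) ^ ν) * e₁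
      - (RatFunc.C lam₁ * ratComp f σ₂ * (φ (derivative σ₂)) ^ ν) * e₂
  have key2 := mul_right_cancel₀ (mul_ne_zero hD₁ hD₂) key
  -- unfold ratComp and clear denominators
  have hq1c := hmap q hq σ₁ h₁
  have hq2c := hmap q hq σ₂ h₂
  have hq'1c := hmap q' hq2 σ₁ h₁
  have hq'2c := hmap q' hq2 σ₂ h₂
  unfold ratComp at key2
  have key3 : φ (p.comp σ₁) * RatFunc.C lam₂ * φ (p'.comp σ₂) * (φ (q.comp σ₂) * φ (q'.comp σ₁))
      = RatFunc.C lam₁ * φ (p.comp σ₂) * φ (p'.comp σ₁) * (φ (q.comp σ₁) * φ (q'.comp σ₂)) := by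
    rw [← hφ, ← hp', ← hq', ← hp'', ← hq''] at key2
    field_simp at key2
    linear_combination key2
  -- translate to a polynomial identity
  set A := p * q' with hA
  set B := q * p' with hB
  have keyP : Polynomial.C lam₂ * (A.comp σ₁ * B.comp σ₂)
      = Polynomial.C lam₁ * (A.comp σ₂ * B.comp σ₁) := by
    apply hφinj
    rw [← RatFunc.algebraMap_C lam₁, ← RatFunc.algebraMap_C lam₂] at key3
    simp only [map_mul, hA, hB, mul_comp]
    linear_combination key3
  have hAne : A ≠ 0 := mul_ne_zero hp hq2
  have hBne : B ≠ 0 := mul_ne_zero hq hp2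
  -- reduce the fraction A/B
  set d := GCDMonoid.gcd A B with hd
  have hdne : d ≠ 0 := gcd_ne_zero_of_right hBne
  set A₀ := A / d with hA₀
  set B₀ := B / d with hB₀
  have hAd : d * A₀ = A := EuclideanDomain.mul_div_cancel' hdne (gcd_dvd_left A B)
  have hBd : d * B₀ = B := EuclideanDomain.mul_div_cancel' hdne (gcd_dvd_right A B)
  have hA₀ne : A₀ ≠ 0 := fun h => hAne (by rw [← hAd, h, mul_zero])
  have hB₀ne : B₀ ≠ 0 := fun h => hBne (by rw [← hBd, h, mul_zero])
  have hcop : IsCoprime A₀ B₀ := isCoprime_div_gcd_div_gcd hBne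
  have hd1 : d.comp σ₁ ≠ 0 := comp_ne_zero' hdne h₁
  have hd2 : d.comp σ₂ ≠ 0 := comp_ne_zero' hdne h₂
  -- cancel d∘σ₁ · d∘σ₂
  have keyQ : Polynomial.C lam₂ * (A₀.comp σ₁ * B₀.comp σ₂)
      = Polynomial.C lam₁ * (A₀.comp σ₂ * B₀.comp σ₁) := by
    apply mul_left_cancel₀ (mul_ne_zero hd1 hd2)
    have hA1 : A.comp σ₁ = d.comp σ₁ * A₀.comp σ₁ := by rw [← mul_comp, hAd]
    have hA2 : A.comp σ₂ = d.comp σ₂ * A₀.comp σ₂ := by rw [← mul_comp, hAd]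
    have hB1 : B.comp σ₁ = d.comp σ₁ * B₀.comp σ₁ := by rw [← mul_comp, hBd]
    have hB2 : B.comp σ₂ = d.comp σ₂ * B₀.comp σ₂ := by rw [← mul_comp, hBd]
    rw [hA1, hA2, hB1, hB2] at keyP
    linear_combination keyP
  -- divisibility and degree bounds
  have hcop1 : IsCoprime (A₀.comp σ₁) (B₀.comp σ₁) := isCoprime_comp' hcop σ₁
  have hmu : lam₂⁻¹ * lam₁ ≠ 0 := mul_ne_zero (inv_ne_zero hlam₂) hlam₁
  have E : A₀.comp σ₁ * B₀.comp σ₂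
      = Polynomial.C (lam₂⁻¹ * lam₁) * (A₀.comp σ₂ * B₀.comp σ₁) := by
    have hC : (Polynomial.C lam₂) * Polynomial.C (lam₂⁻¹ * lam₁) = Polynomial.C lam₁ := by
      rw [← Polynomial.C_mul, mul_inv_cancel_left₀ hlam₂]
    apply mul_left_cancel₀ (Polynomial.C_ne_zero.mpr hlam₂)
    rw [keyQ]
    linear_combination -(A₀.comp σ₂ * B₀.comp σ₁) * hC
  have hdvdA : A₀.comp σ₁ ∣ Polynomial.C (lam₂⁻¹ * lam₁) * A₀.comp σ₂ := by
    apply hcop1.dvd_of_dvd_mul_right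
    exact ⟨B₀.comp σ₂, by linear_combination -E⟩
  have hdvdB : B₀.comp σ₁ ∣ B₀.comp σ₂ := by
    apply hcop1.symm.dvd_of_dvd_mul_right
    exact ⟨Polynomial.C (lam₂⁻¹ * lam₁) * A₀.comp σ₂, by linear_combination E⟩
  have hA₀deg : A₀.natDegree = 0 := by
    by_contra hne
    have hpos : 0 < A₀.natDegree := Nat.pos_of_ne_zero hne
    have hle := natDegree_le_of_dvd hdvdA
      (mul_ne_zero (Polynomial.C_ne_zero.mpr hmu) (comp_ne_zero' hA₀ne h₂))
    rw [natDegree_comp, natDegree_mul (Polynomial.C_ne_zero.mpr hmu)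
      (comp_ne_zero' hA₀ne h₂), natDegree_C, natDegree_comp, zero_add] at hle
    exact absurd hle (not_le.mpr ((mul_lt_mul_iff_right₀ hpos).mpr hdeg))
  have hB₀deg : B₀.natDegree = 0 := by
    by_contra hne
    have hpos : 0 < B₀.natDegree := Nat.pos_of_ne_zero hne
    have hle := natDegree_le_of_dvd hdvdB (comp_ne_zero' hB₀ne h₂)
    rw [natDegree_comp, natDegree_comp] at hle
    exact absurd hle (not_le.mpr ((mul_lt_mul_iff_right₀ hpos).mpr hdeg))
  -- conclude
  set a := A₀.coeff 0 with ha'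
  set b := B₀.coeff 0 with hb'
  have hAC : A₀ = Polynomial.C a := eq_C_of_natDegree_eq_zero hA₀deg
  have hBC : B₀ = Polynomial.C b := eq_C_of_natDegree_eq_zero hB₀deg
  have hane : a ≠ 0 := fun h => hA₀ne (by rw [hAC, h, Polynomial.C_0])
  have hbne : b ≠ 0 := fun h => hB₀ne (by rw [hBC, h, Polynomial.C_0])
  refine ⟨a / b, div_ne_zero hane hbne, ?_⟩
  have hABc : A = Polynomial.C (a / b) * B := by
    rw [← hAd, ← hBd, hAC, hBC, ← mul_assoc, mul_comm (Polynomial.C (a/b)) d, mul_assoc,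
      ← Polynomial.C_mul, div_mul_cancel₀ a hbne]
  have hqz : φ q ≠ 0 := fun h => hq (hφinj (by rw [h, map_zero]))
  have hq'z : φ q' ≠ 0 := fun h => hq2 (hφinj (by rw [h, map_zero]))
  have hmapped : φ p * φ q' = RatFunc.C (a / b) * (φ q * φ p') := by
    have := congrArg φ hABc
    rw [hA, hB] at this
    simpa only [map_mul, hφ, RatFunc.algebraMap_C] using this
  rw [← f.num_div_denom, ← g.num_div_denom, ← mul_div_assoc, div_eq_div_iff hqz hq'z]
  linear_combination hmapped
end

section
/- Let k be an algebraically closed field and let σ₁, σ₂ ∈ k[t] be nonconstant tamely ramified polynomials with deg σ₁ > deg σ₂. If ω = f·(dt)^ν is a semi-invariant form of weight ν ∈ ℤ for (σ₁, σ₂), then the sum of the orders of f over all points of the affine line equals −ν: Σ_{a ∈ k} ord_a f = −ν. -/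
open Polynomial

section Aux

variable {k : Type*} [Field k]

/-- Over an algebraically closed field, the sum of root multiplicities over any finset
containing all roots is the degree. -/
lemma sum_rootMultiplicity_eq [IsAlgClosed k] [DecidableEq k] {p : k[X]} (hp : p ≠ 0) {s : Finset k}
    (hs : p.roots.toFinset ⊆ s) :
    ∑ a ∈ s, (p.rootMultiplicity a : ℤ) = p.natDegree := by
  classical
  have h1 : ∑ a ∈ s, (p.rootMultiplicity a : ℤ)
      = ∑ a ∈ p.roots.toFinset, (p.rootMultiplicity a : ℤ) := by
    refine (Finset.sum_subset hs ?_).symm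
    intro a _ ha
    have : p.roots.count a = 0 := Multiset.count_eq_zero.2 (by
      intro h; exact ha (Multiset.mem_toFinset.2 h))
    rw [Polynomial.count_roots] at this
    simp [this]
  rw [h1]
  have h2 : ∑ a ∈ p.roots.toFinset, (p.rootMultiplicity a : ℤ)
      = ((Multiset.card p.roots : ℕ) : ℤ) := by
    rw [← Multiset.toFinset_sum_count_eq p.roots]
    push_cast
    exact Finset.sum_congr rfl (fun a _ => by rw [Polynomial.count_roots])
  rw [h2]
  congr 1
  have hsplit : Splits p := IsAlgClosed.splits p
  have := hsplit.natDegree_eq_card_roots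
  rwa [eq_comm] at this

lemma finsum_ordAt_eq_intDegree [IsAlgClosed k] {f : RatFunc k} (hf : f ≠ 0) :
    ∑ᶠ a : k, ordAt f a = f.intDegree := by
  classical
  set s : Finset k := f.num.roots.toFinset ∪ f.denom.roots.toFinset with hs
  have hsup : Function.support (fun a => ordAt f a) ⊆ (s : Set k) := by
    intro a ha
    simp only [Function.mem_support] at ha
    by_contra hmem
    simp only [hs, Finset.coe_union, Set.mem_union, Finset.mem_coe,
      Multiset.mem_toFinset] at hmem
    push_neg at hmem
    have h1 : f.num.rootMultiplicity a = 0 := by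
      rw [← Polynomial.count_roots]; exact Multiset.count_eq_zero.2 hmem.1
    have h2 : f.denom.rootMultiplicity a = 0 := by
      rw [← Polynomial.count_roots]; exact Multiset.count_eq_zero.2 hmem.2
    exact ha (by simp [ordAt, h1, h2])
  rw [finsum_eq_sum_of_support_subset _ hsup]
  have hnum : f.num ≠ 0 := RatFunc.num_ne_zero hf
  have hden : f.denom ≠ 0 := f.denom_ne_zero
  simp only [ordAt, Finset.sum_sub_distrib]
  rw [sum_rootMultiplicity_eq hnum (Finset.subset_union_left),
    sum_rootMultiplicity_eq hden (Finset.subset_union_right)]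
  rfl

lemma intDegree_inv {x : RatFunc k} (hx : x ≠ 0) : (x⁻¹).intDegree = -x.intDegree := by
  have h := RatFunc.intDegree_mul hx (inv_ne_zero hx)
  rw [mul_inv_cancel₀ hx, RatFunc.intDegree_one] at h
  omega

lemma intDegree_pow {x : RatFunc k} (hx : x ≠ 0) (n : ℕ) :
    (x ^ n).intDegree = n * x.intDegree := by
  induction n with
  | zero => simp [RatFunc.intDegree_one]
  | succ m ih =>
    rw [pow_succ, RatFunc.intDegree_mul (pow_ne_zero m hx) hx, ih]
    push_cast; ring

lemma intDegree_zpow {x : RatFunc k} (hx : x ≠ 0) (n : ℤ) :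
    (x ^ n).intDegree = n * x.intDegree := by
  cases n with
  | ofNat m => rw [Int.ofNat_eq_coe, zpow_natCast, intDegree_pow hx]
  | negSucc m =>
    rw [zpow_negSucc, intDegree_inv (pow_ne_zero _ hx), intDegree_pow hx, Int.negSucc_eq]
    push_cast; ring

lemma comp_ne_zero {p σ : k[X]} (hp : p ≠ 0) (hσ : 0 < σ.natDegree) : p.comp σ ≠ 0 := by
  intro h
  rcases (Polynomial.comp_eq_zero_iff).1 h with h | ⟨_, h⟩
  · exact hp h
  · rw [h] at hσ; simp at hσ

lemma ratComp_ne_zero {f : RatFunc k} {σ : k[X]} (hf : f ≠ 0) (hσ : 0 < σ.natDegree) :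
    ratComp f σ ≠ 0 := by
  have h1 := comp_ne_zero (RatFunc.num_ne_zero hf) hσ
  have h2 := comp_ne_zero f.denom_ne_zero hσ
  exact div_ne_zero (RatFunc.algebraMap_ne_zero h1) (RatFunc.algebraMap_ne_zero h2)

lemma intDegree_ratComp {f : RatFunc k} {σ : k[X]} (hf : f ≠ 0) (hσ : 0 < σ.natDegree) :
    (ratComp f σ).intDegree = f.intDegree * σ.natDegree := by
  have h1 := comp_ne_zero (RatFunc.num_ne_zero hf) hσ
  have h2 := comp_ne_zero f.denom_ne_zero hσ
  rw [ratComp, div_eq_mul_inv,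
    RatFunc.intDegree_mul (RatFunc.algebraMap_ne_zero h1)
      (inv_ne_zero (RatFunc.algebraMap_ne_zero h2)),
    intDegree_inv (RatFunc.algebraMap_ne_zero h2),
    RatFunc.intDegree_polynomial, RatFunc.intDegree_polynomial,
    Polynomial.natDegree_comp, Polynomial.natDegree_comp, RatFunc.intDegree]
  push_cast; ring

lemma derivative_facts {σ : k[X]} (hσ : 0 < σ.natDegree) (hchar : ¬ ringChar k ∣ σ.natDegree) :
    derivative σ ≠ 0 ∧ (derivative σ).natDegree = σ.natDegree - 1 := by
  have hcast : (σ.natDegree : k) ≠ 0 := by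
    intro h
    exact hchar ((CharP.cast_eq_zero_iff k (ringChar k) σ.natDegree).1 h)
  have hcoeff : (derivative σ).coeff (σ.natDegree - 1) ≠ 0 := by
    rw [Polynomial.coeff_derivative]
    have hd : σ.natDegree - 1 + 1 = σ.natDegree := Nat.succ_pred_eq_of_pos hσ
    rw [hd]
    have hlc : σ.coeff σ.natDegree ≠ 0 := by
      rw [Polynomial.coeff_natDegree]
      exact Polynomial.leadingCoeff_ne_zero.2 (fun h => by simp [h] at hσ)
    have : ((σ.natDegree - 1 : ℕ) : k) + 1 = (σ.natDegree : k) := by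
      exact_mod_cast congrArg (Nat.cast (R := k)) hd
    rw [this]
    exact mul_ne_zero hlc hcast
  have hne : derivative σ ≠ 0 := fun h => hcoeff (by simp [h])
  refine ⟨hne, le_antisymm (Polynomial.natDegree_derivative_le σ)
    (Polynomial.le_natDegree_of_ne_zero hcoeff)⟩

end Aux

/-- for a semi-invariant form `f·(dt)^ν` of a correspondence of the affine line
by tamely ramified polynomials of unequal degrees, the total order of `f` is `-ν`. -/
theorem sum_ord_semiInvariant_eq_neg_weight
    {k : Type*} [Field k] [IsAlgClosed k] (σ₁ σ₂ : k[X])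
    (h₁ : 0 < σ₁.natDegree) (h₂ : 0 < σ₂.natDegree)
    (ht₁ : TamelyRamified σ₁) (ht₂ : TamelyRamified σ₂)
    (hdeg : σ₂.natDegree < σ₁.natDegree)
    (ν : ℤ) (f : RatFunc k) (hf : SemiInvariant σ₁ σ₂ f ν) :
    ∑ᶠ a : k, ordAt f a = -ν := by
  obtain ⟨hf0, lam, hlam, heq⟩ := hf
  obtain ⟨hd1ne, hd1deg⟩ := derivative_facts h₁ ht₁.1
  obtain ⟨hd2ne, hd2deg⟩ := derivative_facts h₂ ht₂.1
  set D := f.intDegree with hD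
  -- nonzeroness facts
  have hc1 := ratComp_ne_zero hf0 h₁
  have hc2 := ratComp_ne_zero hf0 h₂
  have ha1 : algebraMap k[X] (RatFunc k) (derivative σ₁) ≠ 0 :=
    RatFunc.algebraMap_ne_zero hd1ne
  have ha2 : algebraMap k[X] (RatFunc k) (derivative σ₂) ≠ 0 :=
    RatFunc.algebraMap_ne_zero hd2ne
  have hz1 : (algebraMap k[X] (RatFunc k) (derivative σ₁)) ^ ν ≠ 0 := zpow_ne_zero _ ha1
  have hz2 : (algebraMap k[X] (RatFunc k) (derivative σ₂)) ^ ν ≠ 0 := zpow_ne_zero _ ha2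
  have hC : (RatFunc.C lam : RatFunc k) ≠ 0 := by
    rw [← RatFunc.algebraMap_C]
    exact RatFunc.algebraMap_ne_zero (Polynomial.C_ne_zero.mpr hlam)
  -- take intDegree of both sides
  have hL : (ratComp f σ₁ * (algebraMap k[X] (RatFunc k) (derivative σ₁)) ^ ν).intDegree
      = D * σ₁.natDegree + ν * (σ₁.natDegree - 1 : ℕ) := by
    rw [RatFunc.intDegree_mul hc1 hz1, intDegree_ratComp hf0 h₁,
      intDegree_zpow ha1, RatFunc.intDegree_polynomial, hd1deg]
  have hR : (RatFunc.C lam *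
        (ratComp f σ₂ * (algebraMap k[X] (RatFunc k) (derivative σ₂)) ^ ν)).intDegree
      = D * σ₂.natDegree + ν * (σ₂.natDegree - 1 : ℕ) := by
    rw [RatFunc.intDegree_mul hC (mul_ne_zero hc2 hz2), RatFunc.intDegree_C,
      RatFunc.intDegree_mul hc2 hz2, intDegree_ratComp hf0 h₂,
      intDegree_zpow ha2, RatFunc.intDegree_polynomial, hd2deg, ← hD]
    ring
  have hkey : D * σ₁.natDegree + ν * (σ₁.natDegree - 1 : ℕ)
      = D * σ₂.natDegree + ν * (σ₂.natDegree - 1 : ℕ) := by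
    rw [← hL, ← hR, heq]
  have hc1' : ((σ₁.natDegree - 1 : ℕ) : ℤ) = (σ₁.natDegree : ℤ) - 1 := by
    push_cast [Nat.cast_sub h₁]; ring
  have hc2' : ((σ₂.natDegree - 1 : ℕ) : ℤ) = (σ₂.natDegree : ℤ) - 1 := by
    push_cast [Nat.cast_sub h₂]; ring
  rw [hc1', hc2'] at hkey
  have hdiff : ((σ₁.natDegree : ℤ) - σ₂.natDegree) ≠ 0 := by
    have : (σ₂.natDegree : ℤ) < σ₁.natDegree := by exact_mod_cast hdeg
    omega
  have hfin : (D + ν) * ((σ₁.natDegree : ℤ) - σ₂.natDegree) = 0 := by ring_nf; linarith [hkey]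
  have : D + ν = 0 := by
    rcases mul_eq_zero.1 hfin with h | h
    · exact h
    · exact absurd h hdiff
  rw [finsum_ordAt_eq_intDegree hf0, ← hD]
  omega
end

section
/- Let k be an algebraically closed field and let σ₁, σ₂ ∈ k[t] be nonconstant tamely ramified polynomials of degrees d₁, d₂ with d₁ ≥ 4·d₂. If ω = f·(dt)^ν is a semi-invariant form of weight ν ≥ 1 for (σ₁, σ₂) whose conductor equals 1 (there is exactly one point a ∈ k with ord_a f ≠ 0), then f = c·(t − a)^{−ν} for some a ∈ k and c ∈ k∖{0}; that is, div ω = −ν·a on the affine line. -/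
open Polynomial

section Aux

variable {K : Type*} [Field K]

lemma aux_intDegree_inv (x : RatFunc K) : x⁻¹.intDegree = -x.intDegree := by
  rcases eq_or_ne x 0 with rfl | hx
  · simp [RatFunc.intDegree_zero]
  · have h := RatFunc.intDegree_mul hx (inv_ne_zero hx)
    rw [mul_inv_cancel₀ hx, RatFunc.intDegree_one] at h
    omega

lemma aux_intDegree_pow (x : RatFunc K) (hx : x ≠ 0) (n : ℕ) :
    (x ^ n).intDegree = n * x.intDegree := by
  induction n with
  | zero => simp [RatFunc.intDegree_one]
  | succ n ih =>
      rw [pow_succ, RatFunc.intDegree_mul (pow_ne_zero _ hx) hx, ih]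
      push_cast; ring

lemma aux_intDegree_zpow (x : RatFunc K) (hx : x ≠ 0) (n : ℤ) :
    (x ^ n).intDegree = n * x.intDegree := by
  cases n with
  | ofNat m =>
      rw [Int.ofNat_eq_coe, zpow_natCast, aux_intDegree_pow x hx]
  | negSucc m =>
      rw [zpow_negSucc, aux_intDegree_inv, aux_intDegree_pow x hx, Int.negSucc_eq]
      push_cast; ring

lemma aux_comp_ne_zero {p σ : K[X]} (hp : p ≠ 0) (hσ : σ.natDegree ≠ 0) :
    p.comp σ ≠ 0 := by
  intro h
  have hσ0 : σ ≠ 0 := fun h0 => hσ (by simp [h0])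
  have hlc := Polynomial.leadingCoeff_comp (p := p) (q := σ) hσ
  rw [h, Polynomial.leadingCoeff_zero] at hlc
  exact (mul_ne_zero (Polynomial.leadingCoeff_ne_zero.mpr hp)
    (pow_ne_zero _ (Polynomial.leadingCoeff_ne_zero.mpr hσ0))) hlc.symm

lemma aux_ratComp_ne_zero {f : RatFunc K} {σ : K[X]} (hf : f ≠ 0) (hσ : σ.natDegree ≠ 0) :
    ratComp f σ ≠ 0 := by
  apply div_ne_zero
  · exact RatFunc.algebraMap_ne_zero (aux_comp_ne_zero (RatFunc.num_ne_zero hf) hσ)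
  · exact RatFunc.algebraMap_ne_zero (aux_comp_ne_zero f.denom_ne_zero hσ)

lemma aux_intDegree_ratComp {f : RatFunc K} {σ : K[X]} (hf : f ≠ 0) (hσ : σ.natDegree ≠ 0) :
    (ratComp f σ).intDegree = f.intDegree * σ.natDegree := by
  have hn : algebraMap K[X] (RatFunc K) (f.num.comp σ) ≠ 0 :=
    RatFunc.algebraMap_ne_zero (aux_comp_ne_zero (RatFunc.num_ne_zero hf) hσ)
  have hd : algebraMap K[X] (RatFunc K) (f.denom.comp σ) ≠ 0 :=
    RatFunc.algebraMap_ne_zero (aux_comp_ne_zero f.denom_ne_zero hσ)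
  rw [ratComp, div_eq_mul_inv, RatFunc.intDegree_mul hn (inv_ne_zero hd),
    aux_intDegree_inv, RatFunc.intDegree_polynomial, RatFunc.intDegree_polynomial,
    Polynomial.natDegree_comp, Polynomial.natDegree_comp, RatFunc.intDegree]
  push_cast; ring

lemma aux_derivative_facts {σ : K[X]} (h0 : 0 < σ.natDegree)
    (hchar : ¬ ringChar K ∣ σ.natDegree) :
    derivative σ ≠ 0 ∧ (derivative σ).natDegree = σ.natDegree - 1 := by
  have hcast : (σ.natDegree : K) ≠ 0 := by
    rw [Ne, (CharP.cast_eq_zero_iff K (ringChar K) σ.natDegree)]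
    exact hchar
  have hσ0 : σ ≠ 0 := fun h => by simp [h] at h0
  have hcoeff : (derivative σ).coeff (σ.natDegree - 1) ≠ 0 := by
    rw [Polynomial.coeff_derivative]
    have h1 : σ.natDegree - 1 + 1 = σ.natDegree := Nat.succ_pred_eq_of_pos h0
    have h2 : ((σ.natDegree - 1 : ℕ) : K) + 1 = (σ.natDegree : K) := by
      exact_mod_cast congrArg (fun n : ℕ => (n : K)) h1
    rw [h1, h2]
    exact mul_ne_zero (by rwa [Polynomial.coeff_natDegree, Ne, Polynomial.leadingCoeff_eq_zero])
      hcast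
  refine ⟨fun h => hcoeff (by simp [h]), le_antisymm (Polynomial.natDegree_derivative_le σ)
    (Polynomial.le_natDegree_of_ne_zero hcoeff)⟩

lemma aux_single_root {K : Type*} [Field K] [IsAlgClosed K] {p : K[X]} (hp : p ≠ 0) {a : K}
    (h : ∀ x, p.IsRoot x → x = a) :
    p = C p.leadingCoeff * (X - C a) ^ p.natDegree := by
  have hs : p.Splits := IsAlgClosed.splits p
  have hcard : p.roots.card = p.natDegree := by
    have := Polynomial.Splits.natDegree_eq_card_roots hs
    omega
  have hr : p.roots = Multiset.replicate p.natDegree a := by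
    refine Multiset.eq_replicate.mpr ⟨hcard, fun b hb => h b (Polynomial.isRoot_of_mem_roots hb)⟩
  conv_lhs => rw [Polynomial.Splits.eq_prod_roots hs]
  rw [hr, Multiset.map_replicate, Multiset.prod_replicate]

end Aux

/-- if `d₁ ≥ 4·d₂` and the conductor of a semi-invariant form of weight
`ν ≥ 1` equals `1`, then `f = c·(t − a)^{−ν}`, i.e. the form is a flat form of type 1
with `div ω = −ν·a` on the affine line. -/
theorem conductor_one_implies_flat
    {k : Type*} [Field k] [IsAlgClosed k] (σ₁ σ₂ : k[X])
    (h₁ : 0 < σ₁.natDegree) (h₂ : 0 < σ₂.natDegree)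
    (ht₁ : TamelyRamified σ₁) (ht₂ : TamelyRamified σ₂)
    (hdeg : 4 * σ₂.natDegree ≤ σ₁.natDegree)
    (ν : ℤ) (hν : 1 ≤ ν) (f : RatFunc k) (hf : SemiInvariant σ₁ σ₂ f ν)
    (hcond : ∃ a : k, {x : k | ordAt f x ≠ 0} = {a}) :
    ∃ (a : k) (c : k), c ≠ 0 ∧
      f = RatFunc.C c * (algebraMap k[X] (RatFunc k) (X - C a)) ^ (-ν) := by
  obtain ⟨hf0, lam, hlam, heq⟩ := hf
  obtain ⟨a, ha⟩ := hcond
  have hnum0 : f.num ≠ 0 := RatFunc.num_ne_zero hf0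
  have hden0 : f.denom ≠ 0 := f.denom_ne_zero
  have hcop := f.isCoprime_num_denom
  -- every root of num or denom equals a
  have hnotboth : ∀ x : k, ¬ (f.num.IsRoot x ∧ f.denom.IsRoot x) := by
    rintro x ⟨hx1, hx2⟩
    have d1 : (X - C x) ∣ f.num := Polynomial.dvd_iff_isRoot.mpr hx1
    have d2 : (X - C x) ∣ f.denom := Polynomial.dvd_iff_isRoot.mpr hx2
    exact Polynomial.not_isUnit_X_sub_C x (hcop.isUnit_of_dvd' d1 d2)
  have hroots : ∀ x, (f.num.IsRoot x ∨ f.denom.IsRoot x) → x = a := by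
    intro x hx
    by_contra hxa
    have hx0 : ordAt f x = 0 := by
      have hmem : x ∉ ({a} : Set k) := hxa
      rw [← ha] at hmem
      simpa using hmem
    have hrm : f.num.rootMultiplicity x = f.denom.rootMultiplicity x := by
      unfold ordAt at hx0; omega
    rcases hx with h1 | h2
    · have hpos := (Polynomial.rootMultiplicity_pos hnum0).mpr h1
      rw [hrm] at hpos
      exact hnotboth x ⟨h1, (Polynomial.rootMultiplicity_pos hden0).mp hpos⟩
    · have hpos := (Polynomial.rootMultiplicity_pos hden0).mpr h2
      rw [← hrm] at hpos
      exact hnotboth x ⟨(Polynomial.rootMultiplicity_pos hnum0).mp hpos, h2⟩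
  set p := f.num.natDegree with hp
  set q := f.denom.natDegree with hqdef
  have hnumeq : f.num = C f.num.leadingCoeff * (X - C a) ^ p :=
    aux_single_root hnum0 (fun x hx => hroots x (Or.inl hx))
  have hdeneq : f.denom = (X - C a) ^ q := by
    have h := aux_single_root hden0 (fun x hx => hroots x (Or.inr hx))
    rwa [(RatFunc.monic_denom f).leadingCoeff, map_one, one_mul] at h
  -- degree computation
  have hσd1 := aux_derivative_facts h₁ ht₁.1
  have hσd2 := aux_derivative_facts h₂ ht₂.1
  have hA1 : algebraMap k[X] (RatFunc k) (derivative σ₁) ≠ 0 :=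
    RatFunc.algebraMap_ne_zero hσd1.1
  have hA2 : algebraMap k[X] (RatFunc k) (derivative σ₂) ≠ 0 :=
    RatFunc.algebraMap_ne_zero hσd2.1
  have hClam : RatFunc.C lam ≠ 0 := by
    simpa using (RatFunc.algebraMap_ne_zero (Polynomial.C_ne_zero.mpr hlam) :
      algebraMap k[X] (RatFunc k) (C lam) ≠ 0)
  have hdeg_eq := congrArg RatFunc.intDegree heq
  rw [RatFunc.intDegree_mul (aux_ratComp_ne_zero hf0 h₁.ne') (zpow_ne_zero _ hA1),
    RatFunc.intDegree_mul hClam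
      (mul_ne_zero (aux_ratComp_ne_zero hf0 h₂.ne') (zpow_ne_zero _ hA2)),
    RatFunc.intDegree_mul (aux_ratComp_ne_zero hf0 h₂.ne') (zpow_ne_zero _ hA2),
    aux_intDegree_zpow _ hA1, aux_intDegree_zpow _ hA2,
    aux_intDegree_ratComp hf0 h₁.ne', aux_intDegree_ratComp hf0 h₂.ne',
    RatFunc.intDegree_C, RatFunc.intDegree_polynomial, RatFunc.intDegree_polynomial,
    hσd1.2, hσd2.2] at hdeg_eq
  -- deduce intDegree f = -ν
  have hm : f.intDegree = (p : ℤ) - q := rfl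
  have hd12 : (σ₂.natDegree : ℤ) < σ₁.natDegree := by
    have : 4 * σ₂.natDegree ≤ σ₁.natDegree := hdeg
    omega
  have hcast1 : ((σ₁.natDegree - 1 : ℕ) : ℤ) = (σ₁.natDegree : ℤ) - 1 := by
    omega
  have hcast2 : ((σ₂.natDegree - 1 : ℕ) : ℤ) = (σ₂.natDegree : ℤ) - 1 := by
    omega
  rw [hcast1, hcast2] at hdeg_eq
  have hkey : (f.intDegree + ν) * ((σ₁.natDegree : ℤ) - σ₂.natDegree) = 0 := by
    ring_nf
    ring_nf at hdeg_eq
    linarith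
  have hmv : f.intDegree = -ν := by
    rcases mul_eq_zero.mp hkey with h | h
    · omega
    · omega
  rw [hm] at hmv
  -- p = 0
  have hq1 : 1 ≤ q := by omega
  have hp0 : p = 0 := by
    by_contra hp0
    have hna : f.num.IsRoot a := by
      rw [hnumeq]
      simp [Polynomial.IsRoot, zero_pow (by omega : p ≠ 0)]
    have hda : f.denom.IsRoot a := by
      rw [hdeneq]
      simp [Polynomial.IsRoot, zero_pow (by omega : q ≠ 0)]
    exact hnotboth a ⟨hna, hda⟩
  have hqv : (q : ℤ) = ν := by omega
  obtain ⟨c, hc0, hnumC⟩ : ∃ c, c ≠ 0 ∧ f.num = C c :=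
    ⟨f.num.leadingCoeff, Polynomial.leadingCoeff_ne_zero.mpr hnum0,
      by conv_lhs => rw [hnumeq, hp0, pow_zero, mul_one]⟩
  refine ⟨a, c, hc0, ?_⟩
  have hnu : -ν = -(q : ℤ) := by omega
  rw [hnu, zpow_neg, zpow_natCast, ← map_pow, ← hdeneq, ← RatFunc.algebraMap_C, ← hnumC,
    ← div_eq_mul_inv, f.num_div_denom]
end

section
/- Let k be an algebraically closed field and let σ₁, σ₂ ∈ k[t] be nonconstant tamely ramified polynomials such that σ₁′·σ₂ = l·σ₂′·σ₁ in k[t] for some l ∈ k∖{0} (i.e. the flat weight-1 form dt/t is semi-invariant for (σ₁, σ₂)). Then σ₁ and σ₂ have the same set of roots in k: {a ∈ k : σ₁(a) = 0} = {a ∈ k : σ₂(a) = 0}. -/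
open Polynomial

section Aux
variable {k : Type*} [Field k]

lemma deriv_ne_zero_of_tame {σ : k[X]} (h : 0 < σ.natDegree)
    (ht : ¬ (ringChar k ∣ σ.natDegree)) : derivative σ ≠ 0 := by
  intro hd
  have hc : (derivative σ).coeff (σ.natDegree - 1) = 0 := by rw [hd]; simp
  rw [coeff_derivative, Nat.sub_add_cancel h] at hc
  have hn : ((σ.natDegree - 1 : ℕ) : k) + 1 = (σ.natDegree : k) := by
    push_cast [Nat.cast_sub h]
    ring
  rw [hn, mul_eq_zero] at hc
  rcases hc with hc | hc
  · exact (leadingCoeff_ne_zero.mpr (fun h0 => by simp [h0] at h)) hc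
  · exact ht ((CharP.cast_eq_zero_iff k (ringChar k) _).mp hc)

lemma rm_deriv_of_tame {σ : k[X]} (hdeg : 0 < σ.natDegree) (ht : TamelyRamified σ)
    {a : k} (ha : σ.eval a = 0) :
    (derivative σ).rootMultiplicity a = σ.rootMultiplicity a - 1 := by
  apply derivative_rootMultiplicity_of_root_of_mem_nonZeroDivisors ha
  apply mem_nonZeroDivisors_of_ne_zero
  intro h0
  have := ht.2 0 a (by simpa using ha)
  simp only [map_zero, sub_zero] at this
  exact this ((CharP.cast_eq_zero_iff k (ringChar k) _).mp h0)

lemma root_of_root {σ₁ σ₂ : k[X]}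
    (h₁ : 0 < σ₁.natDegree) (h₂ : 0 < σ₂.natDegree)
    (ht₁ : TamelyRamified σ₁) (ht₂ : TamelyRamified σ₂)
    {l : k} (hl : l ≠ 0)
    (heq : derivative σ₁ * σ₂ = C l * (derivative σ₂ * σ₁))
    {a : k} (ha : σ₁.eval a = 0) : σ₂.eval a = 0 := by
  by_contra hb
  have hσ₁ : σ₁ ≠ 0 := fun h0 => by simp [h0] at h₁
  have hσ₂ : σ₂ ≠ 0 := fun h0 => by simp [h0] at h₂
  have hd₁ : derivative σ₁ ≠ 0 := deriv_ne_zero_of_tame h₁ ht₁.1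
  have hd₂ : derivative σ₂ ≠ 0 := deriv_ne_zero_of_tame h₂ ht₂.1
  have hCl : (C l : k[X]) ≠ 0 := by simpa using hl
  have hm := congrArg (rootMultiplicity a) heq
  rw [rootMultiplicity_mul (mul_ne_zero hd₁ hσ₂),
      rootMultiplicity_mul (mul_ne_zero hCl (mul_ne_zero hd₂ hσ₁)),
      rootMultiplicity_mul (mul_ne_zero hd₂ hσ₁),
      rootMultiplicity_eq_zero (show ¬ IsRoot (C l) a by simp [IsRoot, hl]),
      rootMultiplicity_eq_zero (show ¬ IsRoot σ₂ a from hb),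
      rm_deriv_of_tame h₁ ht₁ ha] at hm
  have hpos : 0 < σ₁.rootMultiplicity a := (rootMultiplicity_pos hσ₁).mpr ha
  omega

end Aux

/-- if the flat weight-1 form `dt/t` is semi-invariant for `(σ₁, σ₂)`,
i.e. `σ₁'·σ₂ = l·σ₂'·σ₁` for some nonzero constant `l`, and `σ₁`, `σ₂` are nonconstant
tamely ramified polynomials over an algebraically closed field, then `σ₁` and `σ₂` have the
same set of roots. -/
theorem roots_eq_of_flat_semiInvariant
    {k : Type*} [Field k] [IsAlgClosed k] (σ₁ σ₂ : k[X])
    (h₁ : 0 < σ₁.natDegree) (h₂ : 0 < σ₂.natDegree)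
    (ht₁ : TamelyRamified σ₁) (ht₂ : TamelyRamified σ₂)
    (l : k) (hl : l ≠ 0)
    (heq : derivative σ₁ * σ₂ = C l * (derivative σ₂ * σ₁)) :
    {a : k | σ₁.eval a = 0} = {a : k | σ₂.eval a = 0} := by
  have heq' : derivative σ₂ * σ₁ = C l⁻¹ * (derivative σ₁ * σ₂) := by
    rw [heq, ← mul_assoc, ← C_mul, inv_mul_cancel₀ hl, C_1, one_mul]
  ext a
  simp only [Set.mem_setOf_eq]
  exact ⟨fun ha => root_of_root h₁ h₂ ht₁ ht₂ hl heq ha,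
    fun ha => root_of_root h₂ h₁ ht₂ ht₁ (inv_ne_zero hl) heq' ha⟩
end

section
/- Let k be an algebraically closed field of characteristic p > 0 and let σ₁, σ₂ ∈ k[t] be nonconstant polynomials of degrees d₁, d₂ with 2·d₁·d₂ < p, such that σ₁′·σ₂ = l·σ₂′·σ₁ in k[t] for some l ∈ k∖{0} (i.e. the flat weight-1 form dt/t is semi-invariant for (σ₁, σ₂)). Then there exist a polynomial σ ∈ k[t], coprime positive integers m and h, and constants λ₁, λ₂ ∈ k∖{0} such that σ₁ = λ₁·σ^m and σ₂ = λ₂·σ^h; in other words, both σ₁ and σ₂ are obtained from σ by composing with a multiplicative map λ·t^n. -/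
open Polynomial

lemma flat_key_mult {k : Type*} [Field k] {σ₁ σ₂ : k[X]} (hσ₁ : σ₁ ≠ 0) (hσ₂ : σ₂ ≠ 0)
    {l : k} (heq : derivative σ₁ * σ₂ = C l * (derivative σ₂ * σ₁)) (a : k) :
    ((rootMultiplicity a σ₁ : k)) = l * (rootMultiplicity a σ₂ : k) := by
  set m₁ := rootMultiplicity a σ₁ with hm₁
  set m₂ := rootMultiplicity a σ₂ with hm₂
  set u₁ := σ₁ /ₘ (X - C a) ^ m₁ with hu₁def
  set u₂ := σ₂ /ₘ (X - C a) ^ m₂ with hu₂def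
  have hu₁ : (X - C a) ^ m₁ * u₁ = σ₁ := pow_mul_divByMonic_rootMultiplicity_eq σ₁ a
  have hu₂ : (X - C a) ^ m₂ * u₂ = σ₂ := pow_mul_divByMonic_rootMultiplicity_eq σ₂ a
  have he₁ : eval a u₁ ≠ 0 := eval_divByMonic_pow_rootMultiplicity_ne_zero a hσ₁
  have he₂ : eval a u₂ ≠ 0 := eval_divByMonic_pow_rootMultiplicity_ne_zero a hσ₂
  have haux : ∀ n : ℕ, (X - C a) * derivative ((X - C a) ^ n) = C (n : k) * (X - C a) ^ n := by
    intro n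
    cases n with
    | zero => simp
    | succ n =>
      rw [derivative_pow, derivative_X_sub_C, mul_one, Nat.succ_sub_one]
      ring
  have hd₁ : (X - C a) * derivative σ₁
      = (X - C a) ^ m₁ * (C (m₁ : k) * u₁ + (X - C a) * derivative u₁) := by
    conv_lhs => rw [← hu₁]
    rw [derivative_mul, mul_add, show (X - C a) * (derivative ((X - C a) ^ m₁) * u₁)
      = ((X - C a) * derivative ((X - C a) ^ m₁)) * u₁ from by ring, haux m₁]
    ring
  have hd₂ : (X - C a) * derivative σ₂
      = (X - C a) ^ m₂ * (C (m₂ : k) * u₂ + (X - C a) * derivative u₂) := by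
    conv_lhs => rw [← hu₂]
    rw [derivative_mul, mul_add, show (X - C a) * (derivative ((X - C a) ^ m₂) * u₂)
      = ((X - C a) * derivative ((X - C a) ^ m₂)) * u₂ from by ring, haux m₂]
    ring
  have hmain : (C (m₁ : k) * u₁ + (X - C a) * derivative u₁) * u₂
      = C l * ((C (m₂ : k) * u₂ + (X - C a) * derivative u₂) * u₁) := by
    apply mul_left_cancel₀ (pow_ne_zero (m₁ + m₂) (X_sub_C_ne_zero a))
    calc (X - C a) ^ (m₁ + m₂) * ((C (m₁ : k) * u₁ + (X - C a) * derivative u₁) * u₂)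
        = ((X - C a) * derivative σ₁) * ((X - C a) ^ m₂ * u₂) := by rw [hd₁]; ring
      _ = (X - C a) * (derivative σ₁ * σ₂) := by rw [hu₂]; ring
      _ = (X - C a) * (C l * (derivative σ₂ * σ₁)) := by rw [heq]
      _ = C l * (((X - C a) * derivative σ₂) * ((X - C a) ^ m₁ * u₁)) := by rw [hu₁]; ring
      _ = (X - C a) ^ (m₁ + m₂) * (C l * ((C (m₂ : k) * u₂ + (X - C a) * derivative u₂) * u₁)) := by
          rw [hd₂]; ring
  have hev := congrArg (eval a) hmain
  simp only [eval_mul, eval_add, eval_sub, eval_X, eval_C, sub_self, zero_mul, add_zero] at hev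
  have h2 : ((m₁ : k) - l * (m₂ : k)) * (eval a u₁ * eval a u₂) = 0 := by
    linear_combination hev
  rcases mul_eq_zero.mp h2 with h3 | h3
  · exact sub_eq_zero.mp h3
  · exact absurd h3 (mul_ne_zero he₁ he₂)

/-- over an algebraically closed field of characteristic `p > 0`, if
`2·d₁·d₂ < p` and the flat weight-1 form `dt/t` is semi-invariant for `(σ₁, σ₂)`
(i.e. `σ₁'·σ₂ = l·σ₂'·σ₁`), then `σ₁ = λ₁·σ^m` and `σ₂ = λ₂·σ^h` for a common polynomial
`σ` and coprime positive integers `m, h`. -/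
theorem flat_semiInvariant_common_power
    {k : Type*} [Field k] [IsAlgClosed k] (p : ℕ) [Fact p.Prime] [CharP k p]
    (σ₁ σ₂ : k[X])
    (h₁ : 0 < σ₁.natDegree) (h₂ : 0 < σ₂.natDegree)
    (hp : 2 * σ₁.natDegree * σ₂.natDegree < p)
    (l : k) (hl : l ≠ 0)
    (heq : derivative σ₁ * σ₂ = C l * (derivative σ₂ * σ₁)) :
    ∃ (σ : k[X]) (m h : ℕ) (lam₁ lam₂ : k),
      Nat.Coprime m h ∧ 0 < m ∧ 0 < h ∧ lam₁ ≠ 0 ∧ lam₂ ≠ 0 ∧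
      σ₁ = C lam₁ * σ ^ m ∧ σ₂ = C lam₂ * σ ^ h := by
  classical
  have hσ₁ : σ₁ ≠ 0 := fun h => by simp [h] at h₁
  have hσ₂ : σ₂ ≠ 0 := fun h => by simp [h] at h₂
  set d₁ := σ₁.natDegree with hd₁def
  set d₂ := σ₂.natDegree with hd₂def
  have key : ∀ a : k, ((rootMultiplicity a σ₁ : k)) = l * (rootMultiplicity a σ₂ : k) :=
    fun a => flat_key_mult hσ₁ hσ₂ heq a
  set S : Finset k := σ₁.roots.toFinset ∪ σ₂.roots.toFinset with hS
  have hsum₁ : ∑ a ∈ S, rootMultiplicity a σ₁ = d₁ := by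
    have hcard : Multiset.card σ₁.roots = d₁ :=
      splits_iff_card_roots.mp (IsAlgClosed.splits σ₁)
    have h1 : ∑ a ∈ σ₁.roots.toFinset, σ₁.roots.count a = Multiset.card σ₁.roots :=
      Multiset.toFinset_sum_count_eq σ₁.roots
    have h2 : ∑ a ∈ S, rootMultiplicity a σ₁
        = ∑ a ∈ σ₁.roots.toFinset, rootMultiplicity a σ₁ := by
      refine (Finset.sum_subset (show σ₁.roots.toFinset ⊆ S from hS ▸ Finset.subset_union_left)
        fun x _ hx => ?_).symm
      exact rootMultiplicity_eq_zero fun hr => hx (Multiset.mem_toFinset.mpr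
        ((mem_roots hσ₁).mpr hr))
    rw [h2, ← hcard]
    simpa only [count_roots] using h1
  have hsum₂ : ∑ a ∈ S, rootMultiplicity a σ₂ = d₂ := by
    have hcard : Multiset.card σ₂.roots = d₂ :=
      splits_iff_card_roots.mp (IsAlgClosed.splits σ₂)
    have h1 : ∑ a ∈ σ₂.roots.toFinset, σ₂.roots.count a = Multiset.card σ₂.roots :=
      Multiset.toFinset_sum_count_eq σ₂.roots
    have h2 : ∑ a ∈ S, rootMultiplicity a σ₂
        = ∑ a ∈ σ₂.roots.toFinset, rootMultiplicity a σ₂ := by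
      refine (Finset.sum_subset (show σ₂.roots.toFinset ⊆ S from hS ▸ Finset.subset_union_right)
        fun x _ hx => ?_).symm
      exact rootMultiplicity_eq_zero fun hr => hx (Multiset.mem_toFinset.mpr
        ((mem_roots hσ₂).mpr hr))
    rw [h2, ← hcard]
    simpa only [count_roots] using h1
  have hld : (d₁ : k) = l * (d₂ : k) := by
    rw [← hsum₁, ← hsum₂]
    push_cast
    rw [Finset.mul_sum]
    exact Finset.sum_congr rfl fun a _ => key a
  -- multiplicity bounds
  have hmle₁ : ∀ a : k, rootMultiplicity a σ₁ ≤ d₁ := by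
    intro a
    have hdvd : (X - C a) ^ (rootMultiplicity a σ₁) ∣ σ₁ := pow_rootMultiplicity_dvd σ₁ a
    simpa [natDegree_pow] using natDegree_le_of_dvd hdvd hσ₁
  have hmle₂ : ∀ a : k, rootMultiplicity a σ₂ ≤ d₂ := by
    intro a
    have hdvd : (X - C a) ^ (rootMultiplicity a σ₂) ∣ σ₂ := pow_rootMultiplicity_dvd σ₂ a
    simpa [natDegree_pow] using natDegree_le_of_dvd hdvd hσ₂
  -- the integral proportion
  have hDM : ∀ a : k, d₂ * rootMultiplicity a σ₁ = d₁ * rootMultiplicity a σ₂ := by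
    intro a
    have hk : ((d₂ * rootMultiplicity a σ₁ : ℕ) : k) = ((d₁ * rootMultiplicity a σ₂ : ℕ) : k) := by
      push_cast
      rw [key a, hld]
      ring
    have hb₁ : d₂ * rootMultiplicity a σ₁ < p :=
      lt_of_le_of_lt (le_trans (Nat.mul_le_mul_left d₂ (hmle₁ a))
        (by nlinarith)) hp
    have hb₂ : d₁ * rootMultiplicity a σ₂ < p :=
      lt_of_le_of_lt (le_trans (Nat.mul_le_mul_left d₁ (hmle₂ a))
        (by nlinarith)) hp
    exact CharP.natCast_injOn_Iio k p (Set.mem_Iio.mpr hb₁) (Set.mem_Iio.mpr hb₂) hk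
  -- set up gcd data
  set g := Nat.gcd d₁ d₂ with hg
  have hg0 : 0 < g := Nat.gcd_pos_of_pos_left d₂ h₁
  set m := d₁ / g with hm
  set hh := d₂ / g with hhh
  have hdm : d₁ = g * m := (Nat.mul_div_cancel' (Nat.gcd_dvd_left d₁ d₂)).symm
  have hdh : d₂ = g * hh := (Nat.mul_div_cancel' (Nat.gcd_dvd_right d₁ d₂)).symm
  have hcop : Nat.Coprime m hh := Nat.coprime_div_gcd_div_gcd hg0
  have hm0 : 0 < m := Nat.div_pos (Nat.le_of_dvd h₁ (Nat.gcd_dvd_left d₁ d₂)) hg0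
  have hh0 : 0 < hh := Nat.div_pos (Nat.le_of_dvd h₂ (Nat.gcd_dvd_right d₁ d₂)) hg0
  have hprop : ∀ a : k, hh * rootMultiplicity a σ₁ = m * rootMultiplicity a σ₂ := by
    intro a
    apply Nat.eq_of_mul_eq_mul_left hg0
    rw [← mul_assoc, ← mul_assoc, ← hdh, ← hdm]
    exact hDM a
  have hmdvd : ∀ a : k, m ∣ rootMultiplicity a σ₁ := by
    intro a
    refine hcop.dvd_of_dvd_mul_right ?_
    rw [mul_comm, hprop a]
    exact dvd_mul_right m _
  set e : k → ℕ := fun a => rootMultiplicity a σ₁ / m with he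
  have he₁ : ∀ a : k, rootMultiplicity a σ₁ = m * e a := fun a =>
    (Nat.mul_div_cancel' (hmdvd a)).symm
  have he₂ : ∀ a : k, rootMultiplicity a σ₂ = hh * e a := by
    intro a
    apply Nat.eq_of_mul_eq_mul_left hm0
    rw [← hprop a, he₁ a]
    ring
  set σ : k[X] := ∏ a ∈ S, (X - C a) ^ (e a) with hσ
  -- products
  have hprod : ∀ (τ : k[X]), τ ≠ 0 → τ = C τ.leadingCoeff *
      ∏ a ∈ (τ.roots.toFinset), (X - C a) ^ (rootMultiplicity a τ) := by
    intro τ hτ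
    conv_lhs => rw [Splits.eq_prod_roots (IsAlgClosed.splits τ)]
    rw [prod_multiset_root_eq_finset_root]
  have hext : ∀ (τ : k[X]), τ ≠ 0 → τ.roots.toFinset ⊆ S →
      τ = C τ.leadingCoeff * ∏ a ∈ S, (X - C a) ^ (rootMultiplicity a τ) := by
    intro τ hτ hsub
    conv_lhs => rw [hprod τ hτ]
    congr 1
    refine Finset.prod_subset hsub fun x _ hx => ?_
    rw [rootMultiplicity_eq_zero fun hr => hx (Multiset.mem_toFinset.mpr
      ((mem_roots hτ).mpr hr)), pow_zero]
  refine ⟨σ, m, hh, σ₁.leadingCoeff, σ₂.leadingCoeff, hcop, hm0, hh0,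
    leadingCoeff_ne_zero.mpr hσ₁, leadingCoeff_ne_zero.mpr hσ₂, ?_, ?_⟩
  · conv_lhs => rw [hext σ₁ hσ₁ Finset.subset_union_left]
    congr 1
    rw [hσ, ← Finset.prod_pow]
    exact Finset.prod_congr rfl fun a _ => by rw [← pow_mul, mul_comm (e a) m, ← he₁ a]
  · conv_lhs => rw [hext σ₂ hσ₂ Finset.subset_union_right]
    congr 1
    rw [hσ, ← Finset.prod_pow]
    exact Finset.prod_congr rfl fun a _ => by rw [← pow_mul, mul_comm (e a) hh, ← he₂ a]
end

section
/- Let F be a number field with ring of integers 𝒪_F and let σ₁, σ₂ ∈ F[t] be nonconstant polynomials. Suppose there are infinitely many maximal ideals 𝔭 of 𝒪_F such that all coefficients of σ₁ and σ₂ are 𝔭-integral, the leading coefficients of σ₁ and σ₂ are 𝔭-units, and the reductions σ̄₁, σ̄₂ ∈ k_𝔭[t] modulo 𝔭 satisfy σ̄₁′·σ̄₂ = l·σ̄₂′·σ̄₁ for some nonzero l in the residue field k_𝔭 (i.e. the flat weight-1 form dt/t is semi-invariant for the reduced correspondence). Then there exist a polynomial σ ∈ F[t], coprime positive integers m and h,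 and constants λ₁, λ₂ ∈ F∖{0} such that σ₁ = λ₁·σ^m and σ₂ = λ₂·σ^h. -/
open Polynomial

set_option maxHeartbeats 1000000
set_option synthInstance.maxHeartbeats 400000


private lemma wronskian_const {F : Type*} [Field F] [CharZero F]
    {f g : F[X]} (hf : f ≠ 0) (hg : g ≠ 0)
    (hw : derivative f * g = f * derivative g) :
    ∃ c : F, c ≠ 0 ∧ f = C c * g := by
  classical
  set d := GCDMonoid.gcd f g with hd
  have hdvdf : d ∣ f := gcd_dvd_left f g
  have hdvdg : d ∣ g := gcd_dvd_right f g
  have hdne : d ≠ 0 := gcd_ne_zero_of_right hg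
  set f₀ := f / d with hf₀
  set g₀ := g / d with hg₀
  have hfe : d * f₀ = f := EuclideanDomain.mul_div_cancel' hdne hdvdf
  have hge : d * g₀ = g := EuclideanDomain.mul_div_cancel' hdne hdvdg
  have hcop : IsCoprime f₀ g₀ := isCoprime_div_gcd_div_gcd hg
  have hf₀ne : f₀ ≠ 0 := by intro h0; rw [h0, mul_zero] at hfe; exact hf hfe.symm
  have hg₀ne : g₀ ≠ 0 := by intro h0; rw [h0, mul_zero] at hge; exact hg hge.symm
  have h1 : derivative (d * f₀) * (d * g₀) = d * f₀ * derivative (d * g₀) := by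
    rw [hfe, hge]; exact hw
  rw [derivative_mul, derivative_mul] at h1
  have key : d * d * (derivative f₀ * g₀) = d * d * (f₀ * derivative g₀) := by
    linear_combination h1
  have key2 : derivative f₀ * g₀ = f₀ * derivative g₀ :=
    mul_left_cancel₀ (mul_ne_zero hdne hdne) key
  have hf₀d : derivative f₀ = 0 := by
    by_contra hne
    have hdvd : f₀ ∣ derivative f₀ := by
      refine hcop.dvd_of_dvd_mul_right ?_
      rw [key2]; exact dvd_mul_right f₀ (derivative g₀)
    have hle := Polynomial.natDegree_le_of_dvd hdvd hne
    have hnd : f₀.natDegree ≠ 0 := by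
      intro h0
      rw [Polynomial.eq_C_of_natDegree_eq_zero h0] at hne
      simp at hne
    have := Polynomial.natDegree_derivative_lt hnd
    omega
  have hg₀d : derivative g₀ = 0 := by
    by_contra hne
    have hdvd : g₀ ∣ derivative g₀ := by
      refine hcop.symm.dvd_of_dvd_mul_right ?_
      rw [mul_comm, ← key2]; exact dvd_mul_left g₀ (derivative f₀)
    have hle := Polynomial.natDegree_le_of_dvd hdvd hne
    have hnd : g₀.natDegree ≠ 0 := by
      intro h0
      rw [Polynomial.eq_C_of_natDegree_eq_zero h0] at hne
      simp at hne
    have := Polynomial.natDegree_derivative_lt hnd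
    omega
  obtain ⟨af, haf⟩ : ∃ af : F, f₀ = C af :=
    ⟨f₀.coeff 0, Polynomial.eq_C_of_natDegree_eq_zero
      (Polynomial.natDegree_eq_zero_of_derivative_eq_zero hf₀d)⟩
  obtain ⟨ag, hag⟩ : ∃ ag : F, g₀ = C ag :=
    ⟨g₀.coeff 0, Polynomial.eq_C_of_natDegree_eq_zero
      (Polynomial.natDegree_eq_zero_of_derivative_eq_zero hg₀d)⟩
  have hafne : af ≠ 0 := by intro h0; rw [h0, C_0] at haf; exact hf₀ne haf
  have hagne : ag ≠ 0 := by intro h0; rw [h0, C_0] at hag; exact hg₀ne hag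
  refine ⟨af / ag, div_ne_zero hafne hagne, ?_⟩
  rw [← hfe, ← hge, haf, hag]
  rw [← mul_assoc, mul_comm (C (af/ag)) d, mul_assoc, ← C_mul]
  congr 2
  field_simp


private lemma power_decompose {F : Type*} [Field F] {p q : F[X]} {m h : ℕ} {c : F}
    (hp : p ≠ 0) (hq : q ≠ 0) (hc : c ≠ 0) (hm : 0 < m) (hh : 0 < h)
    (hcop : Nat.Coprime m h) (heq : p ^ h = C c * q ^ m) :
    ∃ (σ : F[X]) (a b : F), a ≠ 0 ∧ b ≠ 0 ∧ p = C a * σ ^ m ∧ q = C b * σ ^ h := by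
  classical
  set K := RatFunc F
  set φ := algebraMap F[X] K with hφ
  have hinj : Function.Injective φ := IsFractionRing.injective F[X] K
  have hPne : φ p ≠ 0 := fun h0 => hp (hinj (by simpa using h0))
  have hQne : φ q ≠ 0 := fun h0 => hq (hinj (by simpa using h0))
  have hCne : φ (C c) ≠ 0 := fun h0 => hc (by
    have := hinj (show φ (C c) = φ 0 by simpa using h0)
    simpa [C_eq_zero] using this)
  set PU : Kˣ := Units.mk0 (φ p) hPne with hPU
  set QU : Kˣ := Units.mk0 (φ q) hQne with hQU
  set cU : Kˣ := Units.mk0 (φ (C c)) hCne with hcU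
  have hrel : PU ^ (h : ℤ) = cU * QU ^ (m : ℤ) := by
    rw [zpow_natCast, zpow_natCast]
    ext
    simp only [Units.val_pow_eq_pow_val, Units.val_mul, hPU, hQU, hcU, Units.val_mk0]
    rw [← map_pow, ← map_pow, heq, map_mul]
  set u : ℤ := Nat.gcdA m h with hu
  set v : ℤ := Nat.gcdB m h with hv
  have hbez : (m : ℤ) * u + (h : ℤ) * v = 1 := by
    have := Nat.gcd_eq_gcd_ab m h
    rw [hcop] at this
    simpa using this.symm
  set τU : Kˣ := PU ^ u * QU ^ v with hτU
  have hQm : QU ^ (m : ℤ) = cU⁻¹ * PU ^ (h : ℤ) := by rw [hrel, inv_mul_cancel_left]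
  have hτm : τU ^ (m : ℤ) = cU ^ (-v) * PU := by
    calc τU ^ (m:ℤ) = PU ^ (u*(m:ℤ)) * QU ^ (v*(m:ℤ)) := by
          rw [hτU, mul_zpow, ← zpow_mul, ← zpow_mul]
    _ = PU ^ (u*(m:ℤ)) * (QU ^ (m:ℤ)) ^ v := by rw [← zpow_mul, mul_comm (m:ℤ) v]
    _ = PU ^ (u*(m:ℤ)) * (cU⁻¹ ^ v * (PU ^ (h:ℤ)) ^ v) := by rw [hQm, mul_zpow]
    _ = cU ^ (-v) * (PU ^ (u*(m:ℤ)) * PU ^ ((h:ℤ)*v)) := by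
          rw [inv_zpow, ← zpow_neg, ← zpow_mul]; exact mul_left_comm _ _ _
    _ = cU ^ (-v) * PU ^ (u*(m:ℤ) + (h:ℤ)*v) := by rw [zpow_add]
    _ = cU ^ (-v) * PU := by rw [show u*(m:ℤ)+(h:ℤ)*v = 1 by linarith, zpow_one]
  have hτh : τU ^ (h : ℤ) = cU ^ u * QU := by
    calc τU ^ (h:ℤ) = PU ^ ((h:ℤ)*u) * QU ^ (v*(h:ℤ)) := by
          rw [hτU, mul_zpow, ← zpow_mul, ← zpow_mul, mul_comm u (h:ℤ)]
    _ = (PU ^ (h:ℤ)) ^ u * QU ^ (v*(h:ℤ)) := by rw [← zpow_mul]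
    _ = cU ^ u * QU ^ ((m:ℤ)*u) * QU ^ (v*(h:ℤ)) := by rw [hrel, mul_zpow, ← zpow_mul]
    _ = cU ^ u * QU ^ ((m:ℤ)*u + v*(h:ℤ)) := by rw [mul_assoc, zpow_add]
    _ = cU ^ u * QU := by rw [show (m:ℤ)*u + v*(h:ℤ) = 1 by linarith, zpow_one]
  have hval_m : ((τU : K)) ^ m = φ (C (c ^ (-v)) * p) := by
    have h1 : ((τU ^ (m:ℤ) : Kˣ) : K) = ((τU : K)) ^ m := by
      rw [zpow_natCast]; exact Units.val_pow_eq_pow_val _ _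
    rw [← h1, hτm]
    rw [map_mul, RatFunc.algebraMap_C, map_zpow₀ RatFunc.C c (-v)]
    simp only [Units.val_mul, hcU]
    rw [Units.val_zpow_eq_zpow_val, Units.val_mk0, RatFunc.algebraMap_C, hPU, Units.val_mk0]
  have hval_h : ((τU : K)) ^ h = φ (C (c ^ u) * q) := by
    have h1 : ((τU ^ (h:ℤ) : Kˣ) : K) = ((τU : K)) ^ h := by
      rw [zpow_natCast]; exact Units.val_pow_eq_pow_val _ _
    rw [← h1, hτh]
    rw [map_mul, RatFunc.algebraMap_C, map_zpow₀ RatFunc.C c u]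
    simp only [Units.val_mul, hcU]
    rw [Units.val_zpow_eq_zpow_val, Units.val_mk0, RatFunc.algebraMap_C, hQU, Units.val_mk0]
  have hint : IsIntegral F[X] ((τU : K)) := by
    refine ⟨X ^ m - Polynomial.C (C (c ^ (-v)) * p), monic_X_pow_sub_C _ hm.ne', ?_⟩
    rw [eval₂_sub, eval₂_X_pow, eval₂_C, hval_m, sub_self]
  obtain ⟨σ, hσ⟩ := IsIntegrallyClosed.isIntegral_iff.mp hint
  have hσm : σ ^ m = C (c ^ (-v)) * p := by
    apply hinj
    rw [map_pow, hσ, hval_m]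
  have hσh : σ ^ h = C (c ^ u) * q := by
    apply hinj
    rw [map_pow, hσ, hval_h]
  have hcv : c ^ (-v) ≠ 0 := zpow_ne_zero _ hc
  have hcu : c ^ u ≠ 0 := zpow_ne_zero _ hc
  refine ⟨σ, (c ^ (-v))⁻¹, (c ^ u)⁻¹, inv_ne_zero hcv, inv_ne_zero hcu, ?_, ?_⟩
  · rw [hσm, ← mul_assoc, ← C_mul, inv_mul_cancel₀ hcv, C_1, one_mul]
  · rw [hσh, ← mul_assoc, ← C_mul, inv_mul_cancel₀ hcu, C_1, one_mul]


/-- over a number field `F`, if for infinitely many maximal ideals `𝔭` of the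
ring of integers the polynomials `σ₁, σ₂` have `𝔭`-integral coefficients (expressed by
clearing a denominator `sᵢ ∉ 𝔭`: `sᵢ·σᵢ = Aᵢ` with `Aᵢ` integral), `𝔭`-unit leading
coefficients, and reductions mod `𝔭` satisfying `σ̄₁'·σ̄₂ = l·σ̄₂'·σ̄₁` for some nonzero `l`
in the residue field (i.e. `dt/t` is semi-invariant for the reduced correspondence), then
`σ₁ = λ₁·σ^m` and `σ₂ = λ₂·σ^h` for some `σ ∈ F[t]`, coprime positive integers `m, h`, and
nonzero constants `λ₁, λ₂`. -/
theorem numberField_flat_weight_one_infinitely_many_places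
    {F : Type*} [Field F] [NumberField F]
    (σ₁ σ₂ : F[X]) (h₁ : 0 < σ₁.natDegree) (h₂ : 0 < σ₂.natDegree)
    (hinf : {𝔭 : Ideal (NumberField.RingOfIntegers F) | 𝔭.IsMaximal ∧
      ∃ (A₁ A₂ : Polynomial (NumberField.RingOfIntegers F))
        (s₁ s₂ : NumberField.RingOfIntegers F),
        s₁ ∉ 𝔭 ∧ s₂ ∉ 𝔭 ∧
        A₁.map (algebraMap (NumberField.RingOfIntegers F) F)
          = C (algebraMap (NumberField.RingOfIntegers F) F s₁) * σ₁ ∧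
        A₂.map (algebraMap (NumberField.RingOfIntegers F) F)
          = C (algebraMap (NumberField.RingOfIntegers F) F s₂) * σ₂ ∧
        A₁.leadingCoeff ∉ 𝔭 ∧ A₂.leadingCoeff ∉ 𝔭 ∧
        ∃ l : NumberField.RingOfIntegers F ⧸ 𝔭, l ≠ 0 ∧
          derivative (A₁.map (Ideal.Quotient.mk 𝔭)) * A₂.map (Ideal.Quotient.mk 𝔭)
            = C l * (derivative (A₂.map (Ideal.Quotient.mk 𝔭))
                * A₁.map (Ideal.Quotient.mk 𝔭))}.Infinite) :
    ∃ (σ : F[X]) (m h : ℕ) (lam₁ lam₂ : F),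
      Nat.Coprime m h ∧ 0 < m ∧ 0 < h ∧ lam₁ ≠ 0 ∧ lam₂ ≠ 0 ∧
      σ₁ = C lam₁ * σ ^ m ∧ σ₂ = C lam₂ * σ ^ h := by
  classical
  set 𝒪 := NumberField.RingOfIntegers F
  set ι := algebraMap 𝒪 F with hι
  have hιinj : Function.Injective ι := IsFractionRing.injective 𝒪 F
  have hσ₁0 : σ₁ ≠ 0 := fun h0 => by simp [h0] at h₁
  have hσ₂0 : σ₂ ≠ 0 := fun h0 => by simp [h0] at h₂
  have hd₁ : derivative σ₁ ≠ 0 := fun h0 =>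
    h₁.ne' (Polynomial.natDegree_eq_zero_of_derivative_eq_zero h0)
  have hd₂ : derivative σ₂ ≠ 0 := fun h0 =>
    h₂.ne' (Polynomial.natDegree_eq_zero_of_derivative_eq_zero h0)
  set a := derivative σ₁ * σ₂ with ha_def
  set b := derivative σ₂ * σ₁ with hb_def
  have ha : a ≠ 0 := mul_ne_zero hd₁ hσ₂0
  have hb : b ≠ 0 := mul_ne_zero hd₂ hσ₁0
  -- STEP A: all 2x2 minors vanish
  have hminor : ∀ i j : ℕ, a.coeff i * b.coeff j = a.coeff j * b.coeff i := by
    intro i j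
    by_contra hne
    set M : F := a.coeff i * b.coeff j - a.coeff j * b.coeff i with hM_def
    have hM : M ≠ 0 := sub_ne_zero.mpr hne
    obtain ⟨⟨x, y⟩, hxy⟩ := IsLocalization.surj (nonZeroDivisors 𝒪) M
    have hyne : ι (y : 𝒪) ≠ 0 := by
      have := nonZeroDivisors.coe_ne_zero y
      intro h0
      exact this (hιinj (by simpa using h0))
    have hx : x ≠ 0 := by
      intro h0
      rw [h0, map_zero] at hxy
      exact hM (by
        rcases mul_eq_zero.mp hxy with h | h
        · exact h
        · exact absurd h hyne)
    -- x lies in every ideal of the infinite family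
    have hmem : ∀ 𝔭 ∈ {𝔭 : Ideal 𝒪 | 𝔭.IsMaximal ∧
        ∃ (A₁ A₂ : Polynomial 𝒪) (s₁ s₂ : 𝒪),
        s₁ ∉ 𝔭 ∧ s₂ ∉ 𝔭 ∧
        A₁.map ι = C (ι s₁) * σ₁ ∧ A₂.map ι = C (ι s₂) * σ₂ ∧
        A₁.leadingCoeff ∉ 𝔭 ∧ A₂.leadingCoeff ∉ 𝔭 ∧
        ∃ l : 𝒪 ⧸ 𝔭, l ≠ 0 ∧
          derivative (A₁.map (Ideal.Quotient.mk 𝔭)) * A₂.map (Ideal.Quotient.mk 𝔭)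
            = C l * (derivative (A₂.map (Ideal.Quotient.mk 𝔭))
                * A₁.map (Ideal.Quotient.mk 𝔭))}, x ∈ 𝔭 := by
      rintro 𝔭 ⟨hmax, A₁, A₂, s₁, s₂, hs₁, hs₂, hA₁, hA₂, -, -, l, -, hl⟩
      haveI := hmax.isPrime
      set ψ := Ideal.Quotient.mk 𝔭 with hψ
      set P := derivative A₁ * A₂ with hP
      set Q := derivative A₂ * A₁ with hQ
      set N : 𝒪 := P.coeff i * Q.coeff j - P.coeff j * Q.coeff i with hN_def
      -- N reduces to 0 mod 𝔭
      have hPmap : P.map ψ = C l * Q.map ψ := by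
        rw [hP, hQ, Polynomial.map_mul, Polynomial.map_mul,
          ← Polynomial.derivative_map, ← Polynomial.derivative_map, hl]
      have hcoeffP : ∀ n : ℕ, ψ (P.coeff n) = l * ψ (Q.coeff n) := by
        intro n
        have := congrArg (fun r => Polynomial.coeff r n) hPmap
        simpa [Polynomial.coeff_map, Polynomial.coeff_C_mul] using this
      have hNmem : N ∈ 𝔭 := by
        rw [← Ideal.Quotient.eq_zero_iff_mem]
        show ψ N = 0
        rw [hN_def, map_sub, map_mul, map_mul, hcoeffP i, hcoeffP j]
        ring
      -- N maps to (s₁s₂)² * M in F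
      have hPmapF : P.map ι = C (ι s₁ * ι s₂) * a := by
        rw [hP, Polynomial.map_mul, ← Polynomial.derivative_map, hA₁, hA₂,
          derivative_C_mul, ha_def, C_mul]
        ring
      have hQmapF : Q.map ι = C (ι s₁ * ι s₂) * b := by
        rw [hQ, Polynomial.map_mul, ← Polynomial.derivative_map, hA₁, hA₂,
          derivative_C_mul, hb_def, C_mul]
        ring
      have hcoeffPF : ∀ n : ℕ, ι (P.coeff n) = ι s₁ * ι s₂ * a.coeff n := by
        intro n
        rw [← Polynomial.coeff_map, hPmapF, Polynomial.coeff_C_mul]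
      have hcoeffQF : ∀ n : ℕ, ι (Q.coeff n) = ι s₁ * ι s₂ * b.coeff n := by
        intro n
        rw [← Polynomial.coeff_map, hQmapF, Polynomial.coeff_C_mul]
      have hNF : ι N = (ι s₁ * ι s₂) ^ 2 * M := by
        rw [hN_def, map_sub, map_mul, map_mul, hcoeffPF, hcoeffPF, hcoeffQF, hcoeffQF,
          hM_def]
        ring
      -- N * y = s₁² s₂² x
      have hNy : N * (y : 𝒪) = s₁ ^ 2 * s₂ ^ 2 * x := by
        apply hιinj
        rw [map_mul, hNF, map_mul, map_mul, map_pow, map_pow]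
        rw [mul_assoc, hxy]
        ring
      have hmem' : s₁ ^ 2 * s₂ ^ 2 * x ∈ 𝔭 := hNy ▸ Ideal.mul_mem_right _ _ hNmem
      have hs₁p : s₁ ^ 2 ∉ 𝔭 := fun hmem'' =>
        hs₁ ((Ideal.IsPrime.pow_mem_iff_mem ‹𝔭.IsPrime› _ two_pos).mp hmem'')
      have hs₂p : s₂ ^ 2 ∉ 𝔭 := fun hmem'' =>
        hs₂ ((Ideal.IsPrime.pow_mem_iff_mem ‹𝔭.IsPrime› _ two_pos).mp hmem'')
      rcases (‹𝔭.IsPrime›.mem_or_mem hmem') with hmm | hmm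
      · rcases ‹𝔭.IsPrime›.mem_or_mem hmm with h' | h'
        · exact absurd h' hs₁p
        · exact absurd h' hs₂p
      · exact hmm
    -- contradiction with finiteness of primes above x
    have hspan : (Ideal.span {x} : Ideal 𝒪) ≠ 0 := by
      simpa [Ideal.span_singleton_eq_bot] using hx
    have hfin := (Ideal.finite_factors hspan).image
      (fun v : IsDedekindDomain.HeightOneSpectrum 𝒪 => v.asIdeal)
    refine hfin.not_infinite (hinf.mono ?_)
    rintro 𝔭 h𝔭
    have hx𝔭 : x ∈ 𝔭 := hmem 𝔭 h𝔭
    have hmax : 𝔭.IsMaximal := h𝔭.1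
    have hbot : 𝔭 ≠ ⊥ :=
      Ring.ne_bot_of_isMaximal_of_not_isField hmax (NumberField.RingOfIntegers.not_isField F)
    exact ⟨⟨𝔭, hmax.isPrime, hbot⟩, Ideal.dvd_span_singleton.mpr hx𝔭, rfl⟩
  -- STEP A': a = C l * b
  set nb := b.natDegree with hnb
  have hblc : b.coeff nb ≠ 0 := by
    rw [hnb, ← Polynomial.leadingCoeff]
    exact Polynomial.leadingCoeff_ne_zero.mpr hb
  have hanb : a.coeff nb ≠ 0 := by
    intro h0
    apply ha
    ext n
    have := hminor n nb
    rw [h0, zero_mul] at this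
    have := mul_eq_zero.mp this
    rcases this with h' | h'
    · simpa using h'
    · exact absurd h' hblc
  set l : F := a.coeff nb / b.coeff nb with hl_def
  have hlne : l ≠ 0 := div_ne_zero hanb hblc
  have hab : a = C l * b := by
    ext n
    rw [Polynomial.coeff_C_mul, hl_def]
    field_simp
    linear_combination (hminor n nb)
  -- STEP B: l = n₁ / n₂
  set n₁ := σ₁.natDegree with hn₁
  set n₂ := σ₂.natDegree with hn₂
  have e₁ : n₁ - 1 + 1 = n₁ := Nat.succ_pred_eq_of_pos h₁
  have e₂ : n₂ - 1 + 1 = n₂ := Nat.succ_pred_eq_of_pos h₂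
  have e₁' : ((n₁ - 1 : ℕ) : F) + 1 = (n₁ : F) := by exact_mod_cast congrArg (Nat.cast : ℕ → F) e₁
  have e₂' : ((n₂ - 1 : ℕ) : F) + 1 = (n₂ : F) := by exact_mod_cast congrArg (Nat.cast : ℕ → F) e₂
  have hc₁ : σ₁.leadingCoeff ≠ 0 := Polynomial.leadingCoeff_ne_zero.mpr hσ₁0
  have hc₂ : σ₂.leadingCoeff ≠ 0 := Polynomial.leadingCoeff_ne_zero.mpr hσ₂0
  have hn₁F : (n₁ : F) ≠ 0 := Nat.cast_ne_zero.mpr h₁.ne'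
  have hn₂F : (n₂ : F) ≠ 0 := Nat.cast_ne_zero.mpr h₂.ne'
  have hdeg₁ : (derivative σ₁).natDegree = n₁ - 1 := by
    refine le_antisymm (Polynomial.natDegree_derivative_le σ₁) ?_
    apply Polynomial.le_natDegree_of_ne_zero
    rw [Polynomial.coeff_derivative, e₁]
    exact mul_ne_zero (by rw [← Polynomial.leadingCoeff]; exact hc₁) (by rw [e₁']; exact hn₁F)
  have hdeg₂ : (derivative σ₂).natDegree = n₂ - 1 := by
    refine le_antisymm (Polynomial.natDegree_derivative_le σ₂) ?_
    apply Polynomial.le_natDegree_of_ne_zero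
    rw [Polynomial.coeff_derivative, e₂]
    exact mul_ne_zero (by rw [← Polynomial.leadingCoeff]; exact hc₂) (by rw [e₂']; exact hn₂F)
  have hlc₁ : (derivative σ₁).leadingCoeff = (n₁ : F) * σ₁.leadingCoeff := by
    rw [Polynomial.leadingCoeff, hdeg₁, Polynomial.coeff_derivative, e₁, e₁',
      Polynomial.leadingCoeff]
    ring
  have hlc₂ : (derivative σ₂).leadingCoeff = (n₂ : F) * σ₂.leadingCoeff := by
    rw [Polynomial.leadingCoeff, hdeg₂, Polynomial.coeff_derivative, e₂, e₂',
      Polynomial.leadingCoeff]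
    ring
  have hlca : a.leadingCoeff = (n₁ : F) * σ₁.leadingCoeff * σ₂.leadingCoeff := by
    rw [ha_def, Polynomial.leadingCoeff_mul, hlc₁]
  have hlcb : b.leadingCoeff = (n₂ : F) * σ₂.leadingCoeff * σ₁.leadingCoeff := by
    rw [hb_def, Polynomial.leadingCoeff_mul, hlc₂]
  have hlcab : a.leadingCoeff = l * b.leadingCoeff := by
    rw [hab, Polynomial.leadingCoeff_mul, Polynomial.leadingCoeff_C]
  have hln : (n₂ : F) * l = (n₁ : F) := by
    have h' := hlcab
    rw [hlca, hlcb] at h'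
    have hcc : σ₁.leadingCoeff * σ₂.leadingCoeff ≠ 0 := mul_ne_zero hc₁ hc₂
    apply mul_right_cancel₀ hcc
    linear_combination -h'
  -- STEP C: integer proportionality
  set g := Nat.gcd n₁ n₂ with hg
  have hgpos : 0 < g := Nat.gcd_pos_of_pos_left n₂ h₁
  obtain ⟨m', hm'⟩ := Nat.gcd_dvd_left n₁ n₂
  obtain ⟨h', hh'⟩ := Nat.gcd_dvd_right n₁ n₂
  set mm := n₁ / g with hmm_def
  set hh := n₂ / g with hhh_def
  have hmme : mm = m' := by rw [hmm_def, hm', hg, Nat.mul_div_cancel_left _ hgpos]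
  have hhhe : hh = h' := by rw [hhh_def, hh', hg, Nat.mul_div_cancel_left _ hgpos]
  have hmpos : 0 < mm := Nat.div_pos (Nat.le_of_dvd h₁ (Nat.gcd_dvd_left _ _)) hgpos
  have hhpos : 0 < hh := Nat.div_pos (Nat.le_of_dvd h₂ (Nat.gcd_dvd_right _ _)) hgpos
  have hcop : Nat.Coprime mm hh := Nat.coprime_div_gcd_div_gcd hgpos
  have hmn : mm * n₂ = hh * n₁ := by
    rw [hmme, hhhe]
    conv_lhs => rw [hh']
    conv_rhs => rw [hm']
    ring
  have hmnF : (mm : F) * (n₂ : F) = (hh : F) * (n₁ : F) := by exact_mod_cast congrArg (Nat.cast : ℕ → F) hmn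
  have hlmh : (hh : F) * l = (mm : F) := by
    apply mul_right_cancel₀ hn₂F
    calc (hh : F) * l * n₂ = (hh : F) * ((n₂ : F) * l) := by ring
    _ = (hh : F) * (n₁ : F) := by rw [hln]
    _ = (mm : F) * (n₂ : F) := hmnF.symm
  have hrel2 : C (hh : F) * (derivative σ₁ * σ₂) = C (mm : F) * (derivative σ₂ * σ₁) := by
    have : C (hh : F) * a = C (mm : F) * b := by
      rw [hab, ← mul_assoc, ← C_mul, hlmh]
    rwa [ha_def, hb_def] at this
  -- STEP D: vanishing Wronskian of the powers
  have hw : derivative (σ₁ ^ hh) * σ₂ ^ mm = σ₁ ^ hh * derivative (σ₂ ^ mm) := by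
    rw [derivative_pow, derivative_pow]
    have f1 : σ₁ ^ hh = σ₁ ^ (hh - 1) * σ₁ := by rw [← pow_succ]; congr 1; omega
    have f2 : σ₂ ^ mm = σ₂ ^ (mm - 1) * σ₂ := by rw [← pow_succ]; congr 1; omega
    rw [f1, f2]
    linear_combination (σ₁ ^ (hh - 1) * σ₂ ^ (mm - 1)) * hrel2
  obtain ⟨c, hcne, hceq⟩ := wronskian_const (pow_ne_zero _ hσ₁0) (pow_ne_zero _ hσ₂0) hw
  -- STEP E: extract the common root polynomial
  obtain ⟨σ, aa, bb, haa, hbb, hp1, hp2⟩ :=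
    power_decompose hσ₁0 hσ₂0 hcne hmpos hhpos hcop hceq
  exact ⟨σ, mm, hh, aa, bb, hcop, hmpos, hhpos, haa, hbb, hp1, hp2⟩
end
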